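/- Let γ be the moment sequence of a k-hyponormal weighted shift (all (k+1)×(k+1) Hankel blocks positive semidefinite), let l ∈ ℕ, and consider the perturbation γ'(t) with γ'_n = γ_n for n ≤ l and γ'_n = tγ_n for n > l. If some block [M_γ]ⁿ_k with n ≤ l is singular with nonzero (1,1)-cofactor and γ satisfies det([M_{γ'(t)}]ⁿ_k) = γ_n·Cof(γ_n)·(1−t)·t^k where Cof(γ_n) is the (1,1) cofactor of [M_γ]ⁿ_k, then any t for which γ'(t) is k-positive satisfies t ≤ 1; hence 1 is not in the interior of the stability interval I^k. -/
import Mathlib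


private lemma psd_det_nonneg {m : ℕ} {A : Matrix (Fin m) (Fin m) ℝ}
    (hA : A.PosSemidef) : 0 ≤ A.det := by
  rw [hA.isHermitian.det_eq_prod_eigenvalues]
  exact Finset.prod_nonneg fun i _ => hA.eigenvalues_nonneg i


theorem perturbation_degenerate_case (γ : ℕ → ℝ) (k l : ℕ)
    (hγpos : ∀ n, 0 < γ n)
    (hpos : ∀ n : ℕ, (Matrix.of fun i j : Fin (k + 2) => γ (n + i + j)).PosSemidef)
    (n : ℕ) (hn : n ≤ l)
    (hsing : (Matrix.of fun i j : Fin (k + 2) => γ (n + i + j)).det = 0)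
    (hcof : (Matrix.of fun i j : Fin (k + 1) => γ (n + 2 + i + j)).det ≠ 0)
    (hdet : ∀ t : ℝ,
      (Matrix.of fun i j : Fin (k + 2) =>
          if n + (i : ℕ) + j ≤ l then γ (n + i + j) else t * γ (n + i + j)).det =
        γ n * (Matrix.of fun i j : Fin (k + 1) => γ (n + 2 + i + j)).det *
          (1 - t) * t ^ (k + 1)) :
    (∀ t : ℝ,
        t ∈ {t : ℝ | 0 ≤ t ∧ ∀ m : ℕ,
          (Matrix.of fun i j : Fin (k + 2) =>
            if m + (i : ℕ) + j ≤ l then γ (m + i + j)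
            else t * γ (m + i + j)).PosSemidef} → t ≤ 1) ∧
      (1 : ℝ) ∉ interior {t : ℝ | 0 ≤ t ∧ ∀ m : ℕ,
          (Matrix.of fun i j : Fin (k + 2) =>
            if m + (i : ℕ) + j ≤ l then γ (m + i + j)
            else t * γ (m + i + j)).PosSemidef} := by
  have hcofpos : 0 < (Matrix.of fun i j : Fin (k + 1) => γ (n + 2 + i + j)).det := by
    have hsub : ((Matrix.of fun i j : Fin (k + 2) => γ (n + 2 + i + j)).submatrix
        Fin.castSucc Fin.castSucc).PosSemidef :=
      (hpos (n + 2)).submatrix _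
    have heq : (Matrix.of fun i j : Fin (k + 2) => γ (n + 2 + i + j)).submatrix
        Fin.castSucc Fin.castSucc = Matrix.of fun i j : Fin (k + 1) => γ (n + 2 + i + j) := by
      ext i j
      simp [Matrix.submatrix]
    rw [heq] at hsub
    exact lt_of_le_of_ne (psd_det_nonneg hsub) (Ne.symm hcof)
  have key : ∀ t : ℝ,
      t ∈ {t : ℝ | 0 ≤ t ∧ ∀ m : ℕ,
        (Matrix.of fun i j : Fin (k + 2) =>
          if m + (i : ℕ) + j ≤ l then γ (m + i + j)
          else t * γ (m + i + j)).PosSemidef} → t ≤ 1 := by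
    intro t ht
    obtain ⟨ht0, hpsd⟩ := ht
    by_contra h
    push_neg at h
    have hd := psd_det_nonneg (hpsd n)
    rw [hdet t] at hd
    have h1 : γ n * (Matrix.of fun i j : Fin (k + 1) => γ (n + 2 + i + j)).det *
        (1 - t) * t ^ (k + 1) < 0 := by
      apply mul_neg_of_neg_of_pos
      · apply mul_neg_of_pos_of_neg
        · exact mul_pos (hγpos n) hcofpos
        · linarith
      · exact pow_pos (by linarith) _
    linarith
  refine ⟨key, ?_⟩
  intro hmem
  have hsubset : _ ⊆ Set.Iic (1 : ℝ) := key
  have h2 := interior_mono hsubset hmem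
  rw [interior_Iic] at h2
  exact lt_irrefl (1 : ℝ) h2
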